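/- arXiv:2101.02378 — 2 statements merged into one kernel-verified Lean document; each statement's English description precedes it below -/
import Mathlib

section
/- Let γ ∈ [0,1) and α ∈ (−1/2 + γ/2, 1/2], and set H = α − γ/2 + 1/2 (> 0). Then: (i) r_U(−t) = r_U(t) for all t ∈ ℝ; (ii) there exists a finite constant C > 0 such that 0 ≤ r_U(t) ≤ C e^{−t(1−γ)/2} for all t ≥ 0; (iii) r_U is integrable on ℝ. -/
open MeasureTheory

/-- Covariance function of the Lamperti transform `U(t) = e^{-tH} Z(e^t)` of the
generalized Riemann–Liouville FBM, where `H = α - γ/2 + 1/2`: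
`r_U(t) = e^{-tH} ∫₀^{min(1,e^t)} (e^t-u)^α (1-u)^α u^{-γ} du`. -/
noncomputable def rU (α γ : ℝ) (t : ℝ) : ℝ :=
  Real.exp (-(t * (α - γ/2 + 1/2))) *
    ∫ u in Set.Ioo (0:ℝ) (min 1 (Real.exp t)), (Real.exp t - u) ^ α * (1-u) ^ α * u ^ (-γ)

section Aux
open Real Set

lemma subst_lemma (c : ℝ) (hc : 0 < c) (f : ℝ → ℝ) :
    ∫ u in Set.Ioo (0:ℝ) c, f u = c * ∫ v in Set.Ioo (0:ℝ) 1, f (c * v) := by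
  rw [← integral_Ioc_eq_integral_Ioo, ← integral_Ioc_eq_integral_Ioo,
    ← intervalIntegral.integral_of_le hc.le, ← intervalIntegral.integral_of_le (zero_le_one)]
  have := intervalIntegral.smul_integral_comp_mul_left (a := (0:ℝ)) (b := 1) f c
  simp only [smul_eq_mul, mul_zero, mul_one] at this
  rw [this]

lemma beta_integrable {β γ : ℝ} (hβ : -1 < β) (hγ0 : 0 ≤ γ) (hγ1 : γ < 1) :
    IntegrableOn (fun u : ℝ => (1-u) ^ β * u ^ (-γ)) (Set.Ioo (0:ℝ) 1) := by
  have hmeas : AEStronglyMeasurable (fun u : ℝ => (1-u) ^ β * u ^ (-γ)) volume := by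
    apply Measurable.aestronglyMeasurable
    fun_prop
  have h1 : IntegrableOn (fun u : ℝ => (1-u) ^ β * u ^ (-γ)) (Set.Ioc (0:ℝ) (1/2)) := by
    have hg : IntegrableOn (fun u : ℝ => max 1 ((1/2:ℝ)^β) * u ^ (-γ)) (Set.Ioc (0:ℝ) (1/2)) :=
      ((intervalIntegral.intervalIntegrable_rpow' (by linarith : (-1:ℝ) < -γ)).1).const_mul _
    refine Integrable.mono' hg hmeas.restrict ?_
    rw [ae_restrict_iff' measurableSet_Ioc]
    filter_upwards with u hu
    have hu0 : 0 < u := hu.1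
    have hu2 : u ≤ 1/2 := hu.2
    have h1u : (0:ℝ) < 1 - u := by linarith
    have hb : (1-u) ^ β ≤ max 1 ((1/2:ℝ)^β) := by
      rcases le_or_gt 0 β with hβ0 | hβ0
      · exact le_max_of_le_left (Real.rpow_le_one h1u.le (by linarith) hβ0)
      · exact le_max_of_le_right (Real.rpow_le_rpow_of_nonpos (by norm_num) (by linarith) hβ0.le)
    rw [Real.norm_eq_abs, abs_of_nonneg (mul_nonneg (Real.rpow_nonneg h1u.le _)
      (Real.rpow_nonneg hu0.le _))]
    exact mul_le_mul_of_nonneg_right hb (Real.rpow_nonneg hu0.le _)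
  have h2 : IntegrableOn (fun u : ℝ => (1-u) ^ β * u ^ (-γ)) (Set.Ioc (1/2:ℝ) 1) := by
    have hg : IntegrableOn (fun u : ℝ => (1-u) ^ β * (2:ℝ)^γ) (Set.Ioc (1/2:ℝ) 1) := by
      have : IntervalIntegrable (fun x : ℝ => x ^ β) volume 0 (1/2) :=
        intervalIntegral.intervalIntegrable_rpow' hβ
      have h := this.comp_sub_left 1
      norm_num at h
      exact h.2.mul_const _
    refine Integrable.mono' hg hmeas.restrict ?_
    rw [ae_restrict_iff' measurableSet_Ioc]
    filter_upwards with u hu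
    have hu0 : (0:ℝ) < u := by linarith [hu.1]
    have h1u : (0:ℝ) ≤ 1 - u := by linarith [hu.2]
    have hb : u ^ (-γ) ≤ (2:ℝ)^γ := by
      have : u ^ (-γ) ≤ (1/2:ℝ) ^ (-γ) :=
        Real.rpow_le_rpow_of_nonpos (by norm_num) hu.1.le (by linarith)
      calc u ^ (-γ) ≤ (1/2:ℝ) ^ (-γ) := this
        _ = (2:ℝ)^γ := by
          rw [one_div, Real.inv_rpow (by norm_num), ← Real.rpow_neg (by norm_num), neg_neg]
    rw [Real.norm_eq_abs, abs_of_nonneg (mul_nonneg (Real.rpow_nonneg h1u _)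
      (Real.rpow_nonneg hu0.le _))]
    exact mul_le_mul_of_nonneg_left hb (Real.rpow_nonneg h1u _)
  exact ((h1.union h2).mono_set (by
    intro x hx
    rcases le_or_gt x (1/2) with h | h
    · exact Or.inl ⟨hx.1, h⟩
    · exact Or.inr ⟨h, hx.2.le⟩))


section Decay
variable {γ α : ℝ} (hγ0 : 0 ≤ γ) (hγ1 : γ < 1) (hα1 : -(1/2) + γ/2 < α) (hα2 : α ≤ 1/2)

lemma rU_nonneg (t : ℝ) : 0 ≤ rU α γ t := by
  apply mul_nonneg (Real.exp_nonneg _)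
  apply setIntegral_nonneg measurableSet_Ioo
  intro u hu
  have h1 : 0 ≤ Real.exp t - u := by
    have := hu.2
    have : u < Real.exp t := lt_of_lt_of_le this (min_le_right _ _)
    linarith
  have h2 : 0 ≤ 1 - u := by
    have : u < 1 := lt_of_lt_of_le hu.2 (min_le_left _ _)
    linarith
  exact mul_nonneg (mul_nonneg (Real.rpow_nonneg h1 _) (Real.rpow_nonneg h2 _))
    (Real.rpow_nonneg hu.1.le _)

include hγ0 hγ1 hα1 in
lemma rU_decay (t : ℝ) (ht : 0 ≤ t) :
    rU α γ t ≤ ((∫ u in Set.Ioo (0:ℝ) 1, ((1-u)^α + (1-u)^(2*α)) * u^(-γ)) + 1) *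
      Real.exp (-(t * (1-γ) / 2)) := by
  have hβ1 : (-1:ℝ) < α := by linarith
  have hβ2 : (-1:ℝ) < 2*α := by linarith
  have hge : (1:ℝ) ≤ Real.exp t := Real.one_le_exp ht
  have hmin : min (1:ℝ) (Real.exp t) = 1 := min_eq_left hge
  have hgint : IntegrableOn (fun u : ℝ => ((1-u)^α + (1-u)^(2*α)) * u^(-γ))
      (Set.Ioo (0:ℝ) 1) := by
    have := (beta_integrable hβ1 hγ0 hγ1).add (beta_integrable hβ2 hγ0 hγ1)
    simpa only [Pi.add_def, add_mul] using this
  set I : ℝ := ∫ u in Set.Ioo (0:ℝ) 1, ((1-u)^α + (1-u)^(2*α)) * u^(-γ) with hI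
  have hI0 : 0 ≤ I := by
    apply setIntegral_nonneg measurableSet_Ioo
    intro u hu
    have h2 : (0:ℝ) ≤ 1 - u := by linarith [hu.2]
    exact mul_nonneg (add_nonneg (Real.rpow_nonneg h2 _) (Real.rpow_nonneg h2 _))
      (Real.rpow_nonneg hu.1.le _)
  -- pointwise bound
  have hpt : ∀ u ∈ Set.Ioo (0:ℝ) 1,
      (Real.exp t - u) ^ α * (1-u) ^ α * u ^ (-γ) ≤
        Real.exp (t*α) * (((1-u)^α + (1-u)^(2*α)) * u^(-γ)) := by
    intro u hu
    have hu0 : 0 < u := hu.1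
    have hu1 : u < 1 := hu.2
    have h1u : (0:ℝ) < 1 - u := by linarith
    have hEu : 0 < Real.exp t - u := by linarith
    have hc0 : 0 ≤ u ^ (-γ) := Real.rpow_nonneg hu0.le _
    have hb0 : 0 ≤ (1-u) ^ α := Real.rpow_nonneg h1u.le _
    have hd0 : 0 ≤ (1-u) ^ (2*α) := Real.rpow_nonneg h1u.le _
    have hE0 : 0 ≤ Real.exp (t*α) := Real.exp_nonneg _
    rcases le_or_gt 0 α with hα0 | hα0
    · have ha : (Real.exp t - u) ^ α ≤ Real.exp (t*α) := by
        rw [Real.exp_mul]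
        exact Real.rpow_le_rpow hEu.le (by linarith) hα0
      calc (Real.exp t - u) ^ α * (1-u) ^ α * u ^ (-γ)
          ≤ Real.exp (t*α) * (1-u) ^ α * u ^ (-γ) := by
            exact mul_le_mul_of_nonneg_right (mul_le_mul_of_nonneg_right ha hb0) hc0
        _ ≤ Real.exp (t*α) * (((1-u)^α + (1-u)^(2*α)) * u^(-γ)) := by
            rw [mul_assoc]
            refine mul_le_mul_of_nonneg_left ?_ hE0
            exact mul_le_mul_of_nonneg_right (le_add_of_nonneg_right hd0) hc0
    · have hle : Real.exp t * (1-u) ≤ Real.exp t - u := by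
        have h1 : u ≤ Real.exp t * u := le_mul_of_one_le_left hu0.le hge
        nlinarith
      have ha : (Real.exp t - u) ^ α ≤ Real.exp (t*α) * (1-u)^α := by
        have h2 : (Real.exp t - u) ^ α ≤ (Real.exp t * (1-u)) ^ α :=
          Real.rpow_le_rpow_of_nonpos (by positivity) hle hα0.le
        rw [Real.mul_rpow (Real.exp_nonneg _) h1u.le, ← Real.exp_mul] at h2
        exact h2
      have hbb : (1-u)^α * (1-u)^α = (1-u)^(2*α) := by
        rw [← Real.rpow_add h1u]; ring_nf
      calc (Real.exp t - u) ^ α * (1-u) ^ α * u ^ (-γ)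
          ≤ (Real.exp (t*α) * (1-u)^α) * (1-u) ^ α * u ^ (-γ) := by
            exact mul_le_mul_of_nonneg_right (mul_le_mul_of_nonneg_right ha hb0) hc0
        _ = Real.exp (t*α) * ((1-u)^(2*α) * u^(-γ)) := by
            rw [mul_assoc (Real.exp (t*α)), hbb, mul_assoc]
        _ ≤ Real.exp (t*α) * (((1-u)^α + (1-u)^(2*α)) * u^(-γ)) := by
            refine mul_le_mul_of_nonneg_left ?_ hE0
            exact mul_le_mul_of_nonneg_right (le_add_of_nonneg_left hb0) hc0
  -- integral bound
  have hint : (∫ u in Set.Ioo (0:ℝ) 1, (Real.exp t - u) ^ α * (1-u) ^ α * u ^ (-γ)) ≤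
      Real.exp (t*α) * I := by
    rw [hI, ← integral_const_mul]
    refine integral_mono_of_nonneg ?_ (hgint.const_mul _) ?_
    · refine (ae_restrict_iff' measurableSet_Ioo).2 (Filter.Eventually.of_forall fun u hu => ?_)
      have h1u : (0:ℝ) < 1 - u := by linarith [hu.2]
      have hEu : 0 < Real.exp t - u := by
        have := Real.one_le_exp ht; linarith [hu.2]
      exact mul_nonneg (mul_nonneg (Real.rpow_nonneg hEu.le _) (Real.rpow_nonneg h1u.le _))
        (Real.rpow_nonneg hu.1.le _)
    · exact (ae_restrict_iff' measurableSet_Ioo).2 (Filter.Eventually.of_forall hpt)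
  have hexp : Real.exp (-(t * (α - γ/2 + 1/2))) * Real.exp (t*α) =
      Real.exp (-(t * (1-γ) / 2)) := by
    rw [← Real.exp_add]; congr 1; ring
  calc rU α γ t = Real.exp (-(t * (α - γ/2 + 1/2))) *
        ∫ u in Set.Ioo (0:ℝ) 1, (Real.exp t - u) ^ α * (1-u) ^ α * u ^ (-γ) := by
        rw [rU, hmin]
    _ ≤ Real.exp (-(t * (α - γ/2 + 1/2))) * (Real.exp (t*α) * I) :=
        mul_le_mul_of_nonneg_left hint (Real.exp_nonneg _)
    _ = I * Real.exp (-(t * (1-γ) / 2)) := by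
        rw [← mul_assoc, hexp]; ring
    _ ≤ (I + 1) * Real.exp (-(t * (1-γ) / 2)) := by
        have := Real.exp_nonneg (-(t * (1-γ) / 2)); nlinarith
end Decay

section Symm
variable {γ α : ℝ}

lemma rU_symm_of_nonneg (t : ℝ) (ht : 0 ≤ t) : rU α γ (-t) = rU α γ t := by
  set c : ℝ := Real.exp (-t) with hc
  have hc0 : 0 < c := Real.exp_pos _
  have hc1 : c ≤ 1 := Real.exp_le_one_iff.2 (by linarith)
  have hce : c * Real.exp t = 1 := by rw [hc, ← Real.exp_add]; simp
  have hge : (1:ℝ) ≤ Real.exp t := Real.one_le_exp ht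
  set K : ℝ := Real.exp (-t*α) * Real.exp (-t*α) * Real.exp (-t*(-γ)) with hK
  have hmin1 : min (1:ℝ) (Real.exp (-t)) = c := min_eq_right hc1
  have hmin2 : min (1:ℝ) (Real.exp t) = 1 := min_eq_left hge
  have hpt : ∀ v ∈ Set.Ioo (0:ℝ) 1,
      (Real.exp (-t) - c*v) ^ α * (1 - c*v) ^ α * (c*v) ^ (-γ) =
        K * ((Real.exp t - v) ^ α * (1-v) ^ α * v ^ (-γ)) := by
    intro v hv
    have hv0 : 0 < v := hv.1
    have hv1 : v < 1 := hv.2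
    have h1v : (0:ℝ) ≤ 1 - v := by linarith
    have hEv : (0:ℝ) ≤ Real.exp t - v := by linarith
    have e1 : Real.exp (-t) - c*v = c * (1 - v) := by rw [hc]; ring
    have e2 : 1 - c*v = c * (Real.exp t - v) := by
      rw [mul_sub, hce]
    rw [e1, e2, Real.mul_rpow hc0.le h1v, Real.mul_rpow hc0.le hEv,
      Real.mul_rpow hc0.le hv0.le, hc, ← Real.exp_mul, ← Real.exp_mul, hK]
    ring
  have hsub := subst_lemma c hc0
    (fun u => (Real.exp (-t) - u) ^ α * (1 - u) ^ α * u ^ (-γ))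
  have hcongr : (∫ v in Set.Ioo (0:ℝ) 1,
        (Real.exp (-t) - c*v) ^ α * (1 - c*v) ^ α * (c*v) ^ (-γ)) =
      K * ∫ v in Set.Ioo (0:ℝ) 1, (Real.exp t - v) ^ α * (1-v) ^ α * v ^ (-γ) := by
    rw [← integral_const_mul]
    exact setIntegral_congr_fun measurableSet_Ioo hpt
  rw [rU, rU, hmin1, hmin2, hsub, hcongr]
  rw [show -(-t * (α - γ/2 + 1/2)) = t * (α - γ/2 + 1/2) by ring]
  rw [← mul_assoc, ← mul_assoc]
  congr 1
  rw [hK, hc, ← Real.exp_add, ← Real.exp_add, ← Real.exp_add, ← Real.exp_add]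
  congr 1
  ring

lemma rU_symm (t : ℝ) : rU α γ (-t) = rU α γ t := by
  rcases le_total 0 t with h | h
  · exact rU_symm_of_nonneg t h
  · have := rU_symm_of_nonneg (γ := γ) (α := α) (-t) (by linarith)
    rw [neg_neg] at this
    exact this.symm
end Symm
lemma rU_measurable {γ α : ℝ} : Measurable (rU α γ) := by
  have hS : MeasurableSet {q : ℝ × ℝ | 0 < q.2 ∧ q.2 < min 1 (Real.exp q.1)} := by
    have h1 : MeasurableSet {q : ℝ × ℝ | 0 < q.2} := measurableSet_lt measurable_const measurable_snd
    have h2 : MeasurableSet {q : ℝ × ℝ | q.2 < min 1 (Real.exp q.1)} :=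
      measurableSet_lt measurable_snd (measurable_const.min (Real.measurable_exp.comp measurable_fst))
    exact h1.inter h2
  have hFm : Measurable (Set.indicator {q : ℝ × ℝ | 0 < q.2 ∧ q.2 < min 1 (Real.exp q.1)}
      (fun q => (Real.exp q.1 - q.2) ^ α * (1 - q.2) ^ α * q.2 ^ (-γ))) := by
    apply Measurable.indicator _ hS
    fun_prop
  have hsm : StronglyMeasurable (fun t => ∫ u,
      Set.indicator {q : ℝ × ℝ | 0 < q.2 ∧ q.2 < min 1 (Real.exp q.1)}
        (fun q => (Real.exp q.1 - q.2) ^ α * (1 - q.2) ^ α * q.2 ^ (-γ)) (t, u)) :=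
    hFm.stronglyMeasurable.integral_prod_right'
  have heq : rU α γ = fun t => Real.exp (-(t * (α - γ/2 + 1/2))) * ∫ u,
      Set.indicator {q : ℝ × ℝ | 0 < q.2 ∧ q.2 < min 1 (Real.exp q.1)}
        (fun q => (Real.exp q.1 - q.2) ^ α * (1 - q.2) ^ α * q.2 ^ (-γ)) (t, u) := by
    funext t
    rw [rU]
    congr 1
    rw [← integral_indicator measurableSet_Ioo]
    refine integral_congr_ae (Filter.Eventually.of_forall fun u => ?_)
    by_cases h : 0 < u ∧ u < min 1 (Real.exp t)
    · rw [Set.indicator_of_mem (Set.mem_Ioo.2 h)]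
      exact (Set.indicator_of_mem
        (show ((t,u) : ℝ × ℝ) ∈ {q : ℝ × ℝ | 0 < q.2 ∧ q.2 < min 1 (Real.exp q.1)} from h)
        (fun q => (Real.exp q.1 - q.2) ^ α * (1 - q.2) ^ α * q.2 ^ (-γ))).symm
    · rw [Set.indicator_of_notMem (fun hm => h (Set.mem_Ioo.1 hm))]
      exact (Set.indicator_of_notMem
        (show ((t,u) : ℝ × ℝ) ∉ {q : ℝ × ℝ | 0 < q.2 ∧ q.2 < min 1 (Real.exp q.1)} from h)
        (fun q => (Real.exp q.1 - q.2) ^ α * (1 - q.2) ^ α * q.2 ^ (-γ))).symm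
  rw [heq]
  exact (Real.measurable_exp.comp ((measurable_id.mul_const _).neg)).mul hsm.measurable

section Int
variable {γ α : ℝ} (hγ0 : 0 ≤ γ) (hγ1 : γ < 1) (hα1 : -(1/2) + γ/2 < α) (hα2 : α ≤ 1/2)

include hγ0 hγ1 hα1 in
lemma rU_integrable : Integrable (rU α γ) := by
  set C : ℝ := (∫ u in Set.Ioo (0:ℝ) 1, ((1-u)^α + (1-u)^(2*α)) * u^(-γ)) + 1 with hC
  have hb : (0:ℝ) < (1-γ)/2 := by linarith
  have hIci : IntegrableOn (rU α γ) (Set.Ici 0) := by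
    have hgint : IntegrableOn (fun t : ℝ => C * Real.exp (-(t * (1-γ) / 2))) (Set.Ici (0:ℝ)) := by
      have h0 : IntegrableOn (fun t : ℝ => Real.exp (-((1-γ)/2) * t)) (Set.Ioi (-1:ℝ)) :=
        exp_neg_integrableOn_Ioi (-1) hb
      have h1 : IntegrableOn (fun t : ℝ => Real.exp (-((1-γ)/2) * t)) (Set.Ici (0:ℝ)) :=
        h0.mono_set (fun x hx => by simp at hx ⊢; linarith)
      have h2 : IntegrableOn (fun t : ℝ => C * Real.exp (-((1-γ)/2) * t)) (Set.Ici (0:ℝ)) :=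
        h1.const_mul C
      refine IntegrableOn.congr_fun h2 (fun x _ => ?_) measurableSet_Ici
      show C * Real.exp (-((1-γ)/2) * x) = C * Real.exp (-(x * (1-γ) / 2))
      congr 1
      ring_nf
    refine Integrable.mono' hgint rU_measurable.aestronglyMeasurable.restrict ?_
    refine (ae_restrict_iff' measurableSet_Ici).2 (Filter.Eventually.of_forall fun t ht => ?_)
    rw [Real.norm_eq_abs, abs_of_nonneg (rU_nonneg t)]
    exact rU_decay hγ0 hγ1 hα1 t ht
  have hIic : IntegrableOn (rU α γ) (Set.Iic 0) := by
    have h1 : Integrable (Set.indicator (Set.Ici (0:ℝ)) (rU α γ)) :=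
      (integrable_indicator_iff measurableSet_Ici).2 hIci
    have h2 := h1.comp_neg
    have h3 : (fun t : ℝ => Set.indicator (Set.Ici (0:ℝ)) (rU α γ) (-t)) =
        Set.indicator (Set.Iic (0:ℝ)) (rU α γ) := by
      funext t
      by_cases h : t ≤ 0
      · rw [Set.indicator_of_mem (show -t ∈ Set.Ici (0:ℝ) by simpa using h),
          Set.indicator_of_mem (Set.mem_Iic.2 h), rU_symm]
      · rw [Set.indicator_of_notMem (show -t ∉ Set.Ici (0:ℝ) by simpa using h),
          Set.indicator_of_notMem (show t ∉ Set.Iic (0:ℝ) by simpa using h)]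
    rw [h3] at h2
    exact (integrable_indicator_iff measurableSet_Iic).1 h2
  have hu : IntegrableOn (rU α γ) (Set.Iic 0 ∪ Set.Ici 0) := hIic.union hIci
  rwa [Set.Iic_union_Ici, integrableOn_univ] at hu

end Int

end Aux

/-- Symmetry, exponential decay, and integrability of the covariance `r_U`. -/
theorem rU_symm_decay_integrable (γ α : ℝ) (hγ0 : 0 ≤ γ) (hγ1 : γ < 1)
    (hα1 : -(1/2) + γ/2 < α) (hα2 : α ≤ 1/2) :
    (∀ t : ℝ, rU α γ (-t) = rU α γ t) ∧
    (∃ C : ℝ, 0 < C ∧ ∀ t : ℝ, 0 ≤ t →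
      0 ≤ rU α γ t ∧ rU α γ t ≤ C * Real.exp (-(t * (1-γ) / 2))) ∧
    Integrable (rU α γ) := by
  refine ⟨fun t => rU_symm t, ?_, rU_integrable hγ0 hγ1 hα1⟩
  refine ⟨(∫ u in Set.Ioo (0:ℝ) 1, ((1-u)^α + (1-u)^(2*α)) * u^(-γ)) + 1, ?_, fun t ht =>
    ⟨rU_nonneg t, rU_decay hγ0 hγ1 hα1 t ht⟩⟩
  have hI0 : 0 ≤ ∫ u in Set.Ioo (0:ℝ) 1, ((1-u)^α + (1-u)^(2*α)) * u^(-γ) := by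
    apply setIntegral_nonneg measurableSet_Ioo
    intro u hu
    have h2 : (0:ℝ) ≤ 1 - u := by linarith [hu.2]
    exact mul_nonneg (add_nonneg (Real.rpow_nonneg h2 _) (Real.rpow_nonneg h2 _))
      (Real.rpow_nonneg hu.1.le _)
  linarith
end

section
/- Let γ ∈ [0,1) and α ∈ (−1/2, 1/2], and let η = 0 if α ∈ (−1/2, 1/2) and η = 1 if α = 1/2. Then there exist constants 0 < c ≤ C < ∞ such that for all x ≥ 2 one has c · x^{−γ} (1 + ln x)^η ≤ ∫₁^x v^{2α−2} (x − v)^{−γ} dv ≤ C · x^{−γ} (1 + ln x)^η. -/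
open MeasureTheory Set intervalIntegral

-- integrability of (x-v)^(-γ) on Ioc a b, b ≤ x
lemma aux_int_xv {γ x a b : ℝ} (hγ1 : γ < 1) (hab : a ≤ b) :
    IntegrableOn (fun v => (x - v) ^ (-γ)) (Set.Ioc a b) := by
  have hf : IntervalIntegrable (fun u : ℝ => u ^ (-γ)) volume (x - a) (x - b) :=
    intervalIntegrable_rpow' (by linarith)
  have h2 := hf.comp_sub_left x
  simp only [sub_sub_cancel] at h2
  exact (intervalIntegrable_iff_integrableOn_Ioc_of_le hab).mp h2

lemma aux_int_v {p a b : ℝ} (ha : 0 < a) (hab : a ≤ b) :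
    IntegrableOn (fun v : ℝ => v ^ p) (Set.Ioc a b) := by
  have hf : IntervalIntegrable (fun u : ℝ => u ^ p) volume a b :=
    intervalIntegrable_rpow (Or.inr (by
      intro h
      rcases h with ⟨h1, _⟩
      simp only [inf_le_iff] at h1
      rcases h1 with h | h <;> linarith))
  exact (intervalIntegrable_iff_integrableOn_Ioc_of_le hab).mp hf

lemma aux_intF {γ α x : ℝ} (hγ0 : 0 ≤ γ) (hγ1 : γ < 1) (hα2 : α ≤ 1/2) (hx : (2:ℝ) ≤ x) :
    IntegrableOn (fun v => v ^ (2*α-2) * (x - v) ^ (-γ)) (Set.Ioo 1 x) := by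
  have hmeas : AEStronglyMeasurable (fun v : ℝ => v ^ (2*α-2) * (x - v) ^ (-γ))
      (volume.restrict (Set.Ioo 1 x)) := by
    apply ContinuousOn.aestronglyMeasurable _ measurableSet_Ioo
    apply ContinuousOn.mul
    · exact continuousOn_id.rpow_const fun v hv => Or.inl (by rcases hv with ⟨h1,h2⟩; simp; linarith)
    · exact (continuousOn_const.sub continuousOn_id).rpow_const
        fun v hv => Or.inl (by rcases hv with ⟨h1,h2⟩; simp; intro h; linarith)
  have hg : IntegrableOn (fun v => (x - v) ^ (-γ)) (Set.Ioo 1 x) :=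
    (aux_int_xv (x := x) hγ1 (by linarith : (1:ℝ) ≤ x)).mono_set Set.Ioo_subset_Ioc_self
  refine hg.integrable.mono hmeas ?_
  rw [ae_restrict_iff' measurableSet_Ioo]
  refine ae_of_all _ fun v hv => ?_
  rcases hv with ⟨hv1, hv2⟩
  have hv0 : (0:ℝ) < v := by linarith
  have hxv : (0:ℝ) < x - v := by linarith
  have h1 : v ^ (2*α-2) ≤ 1 :=
    Real.rpow_le_one_of_one_le_of_nonpos (by linarith) (by linarith)
  have h2 : (0:ℝ) ≤ v ^ (2*α-2) := Real.rpow_nonneg hv0.le _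
  have h3 : (0:ℝ) ≤ (x - v) ^ (-γ) := Real.rpow_nonneg hxv.le _
  simp only [Real.norm_eq_abs, abs_of_nonneg (mul_nonneg h2 h3), abs_of_nonneg h3]
  nlinarith

lemma aux_frame {γ α x : ℝ} (hγ0 : 0 ≤ γ) (hγ1 : γ < 1) (hα2 : α ≤ 1/2) (hx : (2:ℝ) ≤ x) :
    x ^ (-γ) * (∫ v in (1:ℝ)..x, v ^ (2*α-2)) ≤
      (∫ v in Set.Ioo (1:ℝ) x, v ^ (2*α-2) * (x-v) ^ (-γ)) ∧
    (∫ v in Set.Ioo (1:ℝ) x, v ^ (2*α-2) * (x-v) ^ (-γ)) ≤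
      2^γ * x ^ (-γ) * (∫ v in (1:ℝ)..(x/2), v ^ (2*α-2)) + 2^γ * x ^ (-γ) / (1-γ) := by
  have hx1 : (1:ℝ) < x := by linarith
  have h2x : (1:ℝ) ≤ x/2 := by linarith
  have hx2 : x/2 < x := by linarith
  have hhalf : (0:ℝ) < x/2 := by linarith
  have hF := aux_intF (γ := γ) (α := α) (x := x) hγ0 hγ1 hα2 hx
  have hinv : ((2:ℝ)⁻¹) ^ (-γ) = 2^γ := by
    rw [Real.inv_rpow two_pos.le, ← Real.rpow_neg two_pos.le, neg_neg]
  have hhalfpow : (x/2) ^ (-γ) = 2^γ * x ^ (-γ) := by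
    rw [div_eq_mul_inv, Real.mul_rpow (by linarith) (by norm_num), hinv]; ring
  constructor
  · -- lower bound
    rw [intervalIntegral.integral_of_le hx1.le, integral_Ioc_eq_integral_Ioo,
      ← MeasureTheory.integral_const_mul]
    apply setIntegral_mono_on
    · exact ((aux_int_v one_pos hx1.le).mono_set Set.Ioo_subset_Ioc_self).const_mul _
    · exact hF
    · exact measurableSet_Ioo
    · intro v hv
      rcases hv with ⟨hv1, hv2⟩
      have hxv : (0:ℝ) < x - v := by linarith
      have h1 : x ^ (-γ) ≤ (x - v) ^ (-γ) :=
        Real.rpow_le_rpow_of_nonpos hxv (by linarith) (by linarith)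
      calc x ^ (-γ) * v ^ (2*α-2) = v ^ (2*α-2) * x ^ (-γ) := by ring
      _ ≤ v ^ (2*α-2) * (x - v) ^ (-γ) :=
          mul_le_mul_of_nonneg_left h1 (Real.rpow_nonneg (by linarith) _)
  · -- upper bound
    have hsubA : Set.Ioc (1:ℝ) (x/2) ⊆ Set.Ioo 1 x :=
      fun v hv => ⟨hv.1, lt_of_le_of_lt hv.2 hx2⟩
    have hsubB : Set.Ioo (x/2) x ⊆ Set.Ioo 1 x :=
      fun v hv => ⟨lt_of_le_of_lt h2x hv.1, hv.2⟩
    have hsplit : (∫ v in Set.Ioo (1:ℝ) x, v ^ (2*α-2) * (x-v) ^ (-γ)) =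
        (∫ v in Set.Ioc (1:ℝ) (x/2), v ^ (2*α-2) * (x-v) ^ (-γ)) +
        (∫ v in Set.Ioo (x/2) x, v ^ (2*α-2) * (x-v) ^ (-γ)) := by
      rw [← Set.Ioc_union_Ioo_eq_Ioo h2x hx2]
      exact setIntegral_union
        (Set.disjoint_left.mpr (fun v hv hv' => absurd hv'.1 (not_lt.mpr hv.2)))
        measurableSet_Ioo (hF.mono_set hsubA) (hF.mono_set hsubB)
    have hA : (∫ v in Set.Ioc (1:ℝ) (x/2), v ^ (2*α-2) * (x-v) ^ (-γ)) ≤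
        2^γ * x ^ (-γ) * (∫ v in (1:ℝ)..(x/2), v ^ (2*α-2)) := by
      rw [intervalIntegral.integral_of_le h2x, ← MeasureTheory.integral_const_mul]
      apply setIntegral_mono_on
      · exact hF.mono_set hsubA
      · exact (aux_int_v one_pos h2x).const_mul _
      · exact measurableSet_Ioc
      · intro v hv
        rcases hv with ⟨hv1, hv2⟩
        have h1 : (x - v) ^ (-γ) ≤ (x/2) ^ (-γ) :=
          Real.rpow_le_rpow_of_nonpos hhalf (by linarith) (by linarith)
        calc v ^ (2*α-2) * (x-v) ^ (-γ) ≤ v ^ (2*α-2) * (x/2) ^ (-γ) :=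
            mul_le_mul_of_nonneg_left h1 (Real.rpow_nonneg (by linarith) _)
        _ = 2^γ * x ^ (-γ) * v ^ (2*α-2) := by rw [hhalfpow]; ring
    have hK : (∫ v in Set.Ioo (x/2) x, (x-v) ^ (-γ)) = (x/2)^(1-γ) / (1-γ) := by
      rw [← integral_Ioc_eq_integral_Ioo, ← intervalIntegral.integral_of_le hx2.le]
      have := intervalIntegral.integral_comp_sub_left (a := x/2) (b := x)
        (fun u : ℝ => u ^ (-γ)) x
      rw [this, sub_self]
      have hxx : x - x/2 = x/2 := by ring
      rw [hxx, integral_rpow (Or.inl (by linarith)), Real.zero_rpow (by linarith),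
        sub_zero, show -γ+1 = 1-γ by ring]
    have hB : (∫ v in Set.Ioo (x/2) x, v ^ (2*α-2) * (x-v) ^ (-γ)) ≤
        2^γ * x ^ (-γ) / (1-γ) := by
      have step1 : (∫ v in Set.Ioo (x/2) x, v ^ (2*α-2) * (x-v) ^ (-γ)) ≤
          (x/2) ^ (2*α-2) * (∫ v in Set.Ioo (x/2) x, (x-v) ^ (-γ)) := by
        rw [← MeasureTheory.integral_const_mul]
        apply setIntegral_mono_on
        · exact hF.mono_set hsubB
        · exact (((aux_int_xv (x := x) hγ1 hx2.le).mono_set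
            Set.Ioo_subset_Ioc_self)).const_mul _
        · exact measurableSet_Ioo
        · intro v hv
          rcases hv with ⟨hv1, hv2⟩
          have h1 : v ^ (2*α-2) ≤ (x/2) ^ (2*α-2) :=
            Real.rpow_le_rpow_of_nonpos hhalf hv1.le (by linarith)
          exact mul_le_mul_of_nonneg_right h1 (Real.rpow_nonneg (by linarith) _)
      rw [hK] at step1
      have step2 : (x/2) ^ (2*α-2) * ((x/2)^(1-γ) / (1-γ)) ≤ 2^γ * x ^ (-γ) / (1-γ) := by
        have he : (x/2) ^ (2*α-2) * (x/2)^(1-γ) = (x/2)^(2*α-1) * (x/2)^(-γ) := by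
          rw [← Real.rpow_add hhalf, ← Real.rpow_add hhalf]; ring_nf
        have h1 : (x/2)^(2*α-1) ≤ 1 :=
          Real.rpow_le_one_of_one_le_of_nonpos h2x (by linarith)
        have h2 : (0:ℝ) ≤ (x/2)^(-γ) := Real.rpow_nonneg hhalf.le _
        rw [mul_div_assoc'] at *
        rw [he, hhalfpow]
        apply div_le_div_of_nonneg_right ?_ (by linarith)
        nlinarith [Real.rpow_nonneg (show (0:ℝ) ≤ 2 by norm_num) γ,
          Real.rpow_nonneg (show (0:ℝ) ≤ x by linarith) (-γ)]
      linarith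
    linarith

lemma aux_nmem {y : ℝ} (hy : (1:ℝ) ≤ y) : (0:ℝ) ∉ Set.uIcc (1:ℝ) y := by
  rw [Set.mem_uIcc]
  push_neg
  constructor <;> intro h <;> linarith

lemma aux_J {α y : ℝ} (hy : (1:ℝ) ≤ y) (hα : α < 1/2) :
    (∫ v in (1:ℝ)..y, v ^ (2*α-2)) = (1 - y^(2*α-1))/(1-2*α) := by
  rw [integral_rpow (Or.inr ⟨by intro h; norm_num at h; linarith, aux_nmem hy⟩),
    Real.one_rpow, show 2*α-2+1 = 2*α-1 from by ring,
    div_eq_div_iff (by linarith) (by linarith)]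
  ring

lemma aux_Jlog {y : ℝ} (hy : (1:ℝ) ≤ y) :
    (∫ v in (1:ℝ)..y, v ^ (2*(1/2:ℝ)-2)) = Real.log y := by
  simp_rw [show 2*((1:ℝ)/2)-2 = -1 by norm_num, Real.rpow_neg_one]
  rw [integral_inv (aux_nmem hy), div_one]

/-- Two-sided estimate for `∫₁^x v^{2α-2} (x-v)^{-γ} dv ≍ x^{-γ}(1 + ln x)^η` for `x ≥ 2`,
where `η = 0` for `α ∈ (-1/2,1/2)` and `η = 1` for `α = 1/2`. -/
theorem main_integral_estimate (γ α : ℝ) (hγ0 : 0 ≤ γ) (hγ1 : γ < 1)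
    (hα1 : -(1/2) < α) (hα2 : α ≤ 1/2)
    (η : ℝ) (hη : η = if α = 1/2 then 1 else 0) :
    ∃ c C : ℝ, 0 < c ∧ c ≤ C ∧
      ∀ x : ℝ, 2 ≤ x →
        c * x ^ (-γ) * (1 + Real.log x) ^ η ≤
          (∫ v in Set.Ioo (1:ℝ) x, v ^ (2*α-2) * (x-v) ^ (-γ)) ∧
        (∫ v in Set.Ioo (1:ℝ) x, v ^ (2*α-2) * (x-v) ^ (-γ)) ≤
          C * x ^ (-γ) * (1 + Real.log x) ^ η := by
  subst hη
  have hT : (1:ℝ) ≤ 2^γ := by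
    calc (1:ℝ) = 2 ^ (0:ℝ) := (Real.rpow_zero 2).symm
    _ ≤ 2^γ := Real.rpow_le_rpow_of_exponent_le (by norm_num) hγ0
  have hD : (1:ℝ) ≤ 1/(1-γ) := by
    rw [le_div_iff₀ (by linarith)]; linarith
  rcases eq_or_lt_of_le hα2 with h12 | h12
  · -- α = 1/2
    subst h12
    rw [if_pos rfl]
    have hl2 : (0:ℝ) < Real.log 2 := Real.log_pos one_lt_two
    refine ⟨Real.log 2 / (1 + Real.log 2), 2^γ * (1 + 1/(1-γ)), ?_, ?_, ?_⟩
    · positivity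
    · have h1 : Real.log 2 / (1 + Real.log 2) ≤ 1 := by
        rw [div_le_one (by linarith)]; linarith
      nlinarith
    · intro x hx
      have hx1 : (1:ℝ) < x := by linarith
      have hP : (0:ℝ) < x ^ (-γ) := Real.rpow_pos_of_pos (by linarith) _
      have hLx : Real.log 2 ≤ Real.log x := Real.log_le_log two_pos hx
      have hframe := aux_frame (γ := γ) (α := 1/2) (x := x) hγ0 hγ1 le_rfl hx
      rw [aux_Jlog hx1.le, aux_Jlog (by linarith : (1:ℝ) ≤ x/2),
        Real.log_div (by linarith) (by norm_num)] at hframe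
      rw [Real.rpow_one]
      constructor
      · refine le_trans ?_ hframe.1
        have hc' : Real.log 2 / (1 + Real.log 2) * (1 + Real.log x) ≤ Real.log x := by
          rw [div_mul_eq_mul_div, div_le_iff₀ (by linarith)]
          nlinarith
        nlinarith [mul_le_mul_of_nonneg_left hc' hP.le]
      · refine le_trans hframe.2 ?_
        have hT0 : (0:ℝ) < 2^γ := by linarith
        have hD0 : (0:ℝ) < 1/(1-γ) := by linarith
        have h1 : 2^γ * x^(-γ) * (Real.log x - Real.log 2) ≤
            2^γ * x^(-γ) * (1 + Real.log x) := by
          apply mul_le_mul_of_nonneg_left (by linarith) (by positivity)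
        have h2 : 2^γ * x^(-γ) / (1-γ) ≤ 2^γ * (1/(1-γ)) * x^(-γ) * (1 + Real.log x) := by
          rw [div_eq_mul_inv, ← one_div]
          nlinarith [mul_pos (mul_pos hT0 hP) hD0]
        nlinarith
  · -- α < 1/2
    simp only [if_neg h12.ne]
    have hq : 2*α-1 < 0 := by linarith
    have hq2 : (2:ℝ)^(2*α-1) < 1 :=
      Real.rpow_lt_one_of_one_lt_of_neg one_lt_two hq
    have hq2' : (0:ℝ) < 2^(2*α-1) := Real.rpow_pos_of_pos two_pos _
    have hden : (0:ℝ) < 1-2*α := by linarith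
    refine ⟨(1 - 2^(2*α-1))/(1-2*α), 2^γ * (1/(1-2*α) + 1/(1-γ)), ?_, ?_, ?_⟩
    · exact div_pos (by linarith) hden
    · have h1 : (1 - 2^(2*α-1))/(1-2*α) ≤ 1/(1-2*α) := by
        gcongr
        linarith
      have h2 : (0:ℝ) < 1/(1-2*α) := by positivity
      nlinarith
    · intro x hx
      have hx1 : (1:ℝ) < x := by linarith
      have hP : (0:ℝ) < x ^ (-γ) := Real.rpow_pos_of_pos (by linarith) _
      have hframe := aux_frame (γ := γ) (α := α) (x := x) hγ0 hγ1 hα2 hx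
      rw [aux_J hx1.le h12, aux_J (by linarith : (1:ℝ) ≤ x/2) h12] at hframe
      rw [Real.rpow_zero, mul_one, mul_one]
      have hxq : x^(2*α-1) ≤ 2^(2*α-1) :=
        Real.rpow_le_rpow_of_nonpos two_pos hx hq.le
      have hxq0 : (0:ℝ) ≤ x^(2*α-1) := Real.rpow_nonneg (by linarith) _
      have hhq0 : (0:ℝ) ≤ (x/2)^(2*α-1) := Real.rpow_nonneg (by linarith) _
      constructor
      · refine le_trans ?_ hframe.1
        have hJc : (1 - 2^(2*α-1))/(1-2*α) ≤ (1 - x^(2*α-1))/(1-2*α) := by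
          gcongr
        nlinarith [mul_le_mul_of_nonneg_left hJc hP.le]
      · refine le_trans hframe.2 ?_
        have hJ2 : (1 - (x/2)^(2*α-1))/(1-2*α) ≤ 1/(1-2*α) := by
          gcongr; linarith
        have hT0 : (0:ℝ) < 2^γ := by linarith
        have hD0 : (0:ℝ) < 1/(1-γ) := by linarith
        have h2 : 2^γ * x^(-γ) / (1-γ) = 2^γ * (1/(1-γ)) * x^(-γ) := by
          field_simp
        rw [h2]
        nlinarith [mul_le_mul_of_nonneg_left hJ2 (mul_pos hT0 hP).le]
end
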